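/- Let k ≥ 1 be an integer with 3k ≤ n, and set m = 2k. Then ε_k + ε_{3k} is a root of D_{n+1} of height 2m which is not the sum of two roots of height m, and every positive root of D_{n+1} whose height is divisible by m can be written as a sum of elements of R_m ∪ {ε_k + ε_{3k}}. -/

import Mathlib

noncomputable section

/-- The standard basis vector `ε_i` of `ℝ^{n+1}` (indices `0, 1, …, n`). -/
def eps (N : ℕ) (i : Fin N) : Fin N → ℝ := fun j => if j = i then 1 else 0

/-- The root system of type `D_{n+1}`. -/
def Droots (n : ℕ) : Set (Fin (n + 1) → ℝ) :=
  {v | ∃ i j : Fin (n + 1), i < j ∧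
        (v = eps (n + 1) j - eps (n + 1) i ∨ v = -(eps (n + 1) j - eps (n + 1) i) ∨
         v = eps (n + 1) j + eps (n + 1) i ∨ v = -(eps (n + 1) j + eps (n + 1) i))}

/-- The height functional for type `D_{n+1}`. -/
def htD (n : ℕ) (v : Fin (n + 1) → ℝ) : ℝ := ∑ i : Fin (n + 1), v i * (i : ℝ)

lemma eps_congr {n : ℕ} {a b : ℕ} (h : a = b) (ha : a < n+1) (hb : b < n+1) :
    eps (n+1) ⟨a, ha⟩ = eps (n+1) ⟨b, hb⟩ := by subst h; rfl

lemma DdiffMem (n k : ℕ) (hk : 1 ≤ k) (S : AddSubmonoid (Fin (n+1) → ℝ))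
    (hdiff : ∀ i : ℕ, (h : i + 2*k ≤ n) →
      eps (n+1) ⟨i + 2*k, by omega⟩ - eps (n+1) ⟨i, by omega⟩ ∈ S) :
    ∀ l i j : ℕ, (hl : 1 ≤ l) → (hij : i ≤ j) → (hj : j ≤ n) → (hji : j = i + 2*k*l) →
      eps (n+1) ⟨j, by omega⟩ - eps (n+1) ⟨i, by omega⟩ ∈ S := by
  intro l
  induction l with
  | zero => omega
  | succ l ih =>
    intro i j hl hij hj hji
    have e1 : 2*k*(l+1) = 2*k*l + 2*k := by ring
    rcases Nat.eq_zero_or_pos l with h0 | hpos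
    · subst h0
      have e0 : 2*k*0 = 0 := by ring
      rw [eps_congr (show j = i + 2*k by omega) (by omega) (by omega)]
      exact hdiff i (by omega)
    · have hmid : i + 2*k*l ≤ n := by omega
      have h1 : eps (n+1) ⟨j, by omega⟩ - eps (n+1) ⟨i + 2*k*l, by omega⟩ ∈ S := by
        rw [eps_congr (show j = (i + 2*k*l) + 2*k by omega) (by omega) (by omega)]
        exact hdiff (i + 2*k*l) (by omega)
      have h2 := ih i (i + 2*k*l) hpos (Nat.le_add_right _ _) hmid rfl
      have := S.add_mem h1 h2
      rwa [sub_add_sub_cancel] at this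

lemma DsumMem (n k : ℕ) (hk : 1 ≤ k) (h3k : 3*k ≤ n) (S : AddSubmonoid (Fin (n+1) → ℝ))
    (hdiff : ∀ i : ℕ, (h : i + 2*k ≤ n) →
      eps (n+1) ⟨i + 2*k, by omega⟩ - eps (n+1) ⟨i, by omega⟩ ∈ S)
    (hsum : ∀ p : ℕ, (hp : p < k) →
      eps (n+1) ⟨2*k - p, by omega⟩ + eps (n+1) ⟨p, by omega⟩ ∈ S)
    (hdel : eps (n+1) ⟨k, by omega⟩ + eps (n+1) ⟨3*k, Nat.lt_succ_of_le h3k⟩ ∈ S) :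
    ∀ s i j : ℕ, (hij : i < j) → (hj : j ≤ n) → (hs : 1 ≤ s) → (hsum2 : i + j = 2*k*s) →
      eps (n+1) ⟨j, by omega⟩ + eps (n+1) ⟨i, by omega⟩ ∈ S := by
  intro s
  induction s using Nat.strong_induction_on with
  | _ s ih =>
  intro i j hij hj hs hsum2
  obtain ⟨t, rfl⟩ : ∃ t, s = t + 1 := ⟨s - 1, by omega⟩
  have e1 : 2*k*(t+1) = 2*k*t + 2*k := by ring
  rcases Nat.eq_zero_or_pos t with h0 | hpos
  · -- s = 1 : i + j = 2k, i < k
    subst h0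
    have e0 : 2*k*0 = 0 := by ring
    have hik : i < k := by omega
    have := hsum i hik
    rwa [eps_congr (show (2*k - i : ℕ) = j by omega) (by omega) (by omega)] at this
  · have h2kt : 2*k ≤ 2*k*t := Nat.le_mul_of_pos_right _ hpos
    have hj2k : 2*k < j := by omega
    have h1 : eps (n+1) ⟨j, by omega⟩ - eps (n+1) ⟨j - 2*k, by omega⟩ ∈ S := by
      have := hdiff (j - 2*k) (by omega)
      rwa [eps_congr (show (j - 2*k) + 2*k = j by omega) (by omega) (by omega)] at this
    by_cases hcase : i + 2*k = j
    · -- i = k(s-1), j = k(s+1)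
      rcases Nat.lt_or_ge t 2 with ht2 | ht2
      · -- t = 1 : (i,j) = (k,3k), use δ
        have ht1 : t = 1 := by omega
        subst ht1
        have e2 : 2*k*1 = 2*k := by ring
        have hi : i = k := by omega
        have hjv : j = 3*k := by omega
        rw [eps_congr hjv (by omega) (by omega), eps_congr hi (by omega) (by omega)]
        convert hdel using 1
        exact add_comm _ _
      · -- t ≥ 2 : i ≥ 2k
        have h4kt : 2*k*2 ≤ 2*k*t := Nat.mul_le_mul le_rfl ht2
        have e2 : 2*k*2 = 4*k := by ring
        have hi2k : 2*k ≤ i := by omega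
        have h1' : eps (n+1) ⟨i, by omega⟩ - eps (n+1) ⟨i - 2*k, by omega⟩ ∈ S := by
          have := hdiff (i - 2*k) (by omega)
          rwa [eps_congr (show (i - 2*k) + 2*k = i by omega) (by omega) (by omega)] at this
        have h2 : eps (n+1) ⟨j, by omega⟩ + eps (n+1) ⟨i - 2*k, by omega⟩ ∈ S :=
          ih t (by omega) (i - 2*k) j (by omega) hj (by omega) (by omega)
        have := S.add_mem h1' h2
        rwa [show eps (n+1) ⟨i, by omega⟩ - eps (n+1) ⟨i - 2*k, by omega⟩ +
            (eps (n+1) ⟨j, by omega⟩ + eps (n+1) ⟨i - 2*k, by omega⟩)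
            = eps (n+1) ⟨j, by omega⟩ + eps (n+1) ⟨i, by omega⟩ by abel] at this
    · rcases Nat.lt_or_ge i (j - 2*k) with hlt | hge
      · have h2 : eps (n+1) ⟨j - 2*k, by omega⟩ + eps (n+1) ⟨i, by omega⟩ ∈ S :=
          ih t (by omega) i (j - 2*k) hlt (by omega) (by omega) (by omega)
        have := S.add_mem h1 h2
        rwa [show eps (n+1) ⟨j, by omega⟩ - eps (n+1) ⟨j - 2*k, by omega⟩ +
            (eps (n+1) ⟨j - 2*k, by omega⟩ + eps (n+1) ⟨i, by omega⟩)
            = eps (n+1) ⟨j, by omega⟩ + eps (n+1) ⟨i, by omega⟩ by abel] at this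
      · have hgt : j - 2*k < i := by omega
        have h2 : eps (n+1) ⟨i, by omega⟩ + eps (n+1) ⟨j - 2*k, by omega⟩ ∈ S :=
          ih t (by omega) (j - 2*k) i hgt (by omega) (by omega) (by omega)
        have := S.add_mem h1 h2
        rwa [show eps (n+1) ⟨j, by omega⟩ - eps (n+1) ⟨j - 2*k, by omega⟩ +
            (eps (n+1) ⟨i, by omega⟩ + eps (n+1) ⟨j - 2*k, by omega⟩)
            = eps (n+1) ⟨j, by omega⟩ + eps (n+1) ⟨i, by omega⟩ by abel] at this

lemma htD_eps (n : ℕ) (j : Fin (n+1)) : htD n (eps (n+1) j) = (j : ℝ) := by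
  unfold htD eps
  rw [Finset.sum_eq_single j] <;> simp +contextual
lemma htD_add (n : ℕ) (a b : Fin (n+1) → ℝ) : htD n (a+b) = htD n a + htD n b := by
  simp [htD, add_mul, Finset.sum_add_distrib]
lemma htD_neg (n : ℕ) (a : Fin (n+1) → ℝ) : htD n (-a) = -htD n a := by
  simp [htD]
lemma htD_sub (n : ℕ) (a b : Fin (n+1) → ℝ) : htD n (a-b) = htD n a - htD n b := by
  simp [htD, sub_mul, Finset.sum_sub_distrib]

def csD (n : ℕ) (v : Fin (n+1) → ℝ) : ℝ := ∑ i : Fin (n+1), v i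

lemma csD_eps (n : ℕ) (j : Fin (n+1)) : csD n (eps (n+1) j) = 1 := by
  simp [csD, eps]
lemma csD_add (n : ℕ) (a b : Fin (n+1) → ℝ) : csD n (a+b) = csD n a + csD n b := by
  simp [csD, Finset.sum_add_distrib]
lemma csD_sub (n : ℕ) (a b : Fin (n+1) → ℝ) : csD n (a-b) = csD n a - csD n b := by
  simp [csD, Finset.sum_sub_distrib]

lemma root_pos {n : ℕ} {v : Fin (n+1) → ℝ} (hv : v ∈ Droots n) (hpos : 0 < htD n v) :
    ∃ i j : Fin (n+1), i < j ∧
      ((v = eps (n+1) j - eps (n+1) i ∧ htD n v = (j:ℝ) - i) ∨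
       (v = eps (n+1) j + eps (n+1) i ∧ htD n v = (j:ℝ) + i)) := by
  obtain ⟨i, j, hij, h⟩ := hv
  have hji : (i:ℝ) < j := by exact_mod_cast hij
  have hi0 : (0:ℝ) ≤ i := by positivity
  rcases h with h | h | h | h
  · exact ⟨i, j, hij, Or.inl ⟨h, by rw [h, htD_sub, htD_eps, htD_eps]⟩⟩
  · exfalso
    rw [h, htD_neg, htD_sub, htD_eps, htD_eps] at hpos
    linarith
  · exact ⟨i, j, hij, Or.inr ⟨h, by rw [h, htD_add, htD_eps, htD_eps]⟩⟩
  · exfalso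
    rw [h, htD_neg, htD_add, htD_eps, htD_eps] at hpos
    linarith

lemma no_decomp_aux (n k : ℕ) (hk : 1 ≤ k) (h3k : 3*k ≤ n)
    (i j p q : Fin (n+1)) (hij : (i:ℕ) + 2*k = j) (hpq : (p:ℕ) < q) (hq : (p:ℕ) + q = 2*k)
    (heq : eps (n+1) ⟨k, by omega⟩ + eps (n+1) ⟨3*k, Nat.lt_succ_of_le h3k⟩
      = (eps (n+1) j - eps (n+1) i) + (eps (n+1) q + eps (n+1) p)) : False := by
  have hkp : (p:ℕ) < k := by omega
  have hkq : (q:ℕ) < 3*k := by omega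
  have hqk : k < (q:ℕ) := by omega
  have hx := congrFun heq ⟨3*k, by omega⟩
  simp only [eps, Pi.add_apply, Pi.sub_apply] at hx
  rw [if_neg (show ¬((⟨3*k, by omega⟩ : Fin (n+1)) = ⟨k, by omega⟩) by
        simp only [Fin.ext_iff, Fin.val_mk]; omega),
      if_neg (show ¬((⟨3*k, by omega⟩ : Fin (n+1)) = q) by
        simp only [Fin.ext_iff, Fin.val_mk]; omega),
      if_neg (show ¬((⟨3*k, by omega⟩ : Fin (n+1)) = p) by
        simp only [Fin.ext_iff, Fin.val_mk]; omega)] at hx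
  simp only [eq_self_iff_true, if_true] at hx
  by_cases h3j : (⟨3*k, by omega⟩ : Fin (n+1)) = j
  · have hjv : (j:ℕ) = 3*k := by rw [← h3j]
    have hiv : (i:ℕ) = k := by omega
    have hy := congrFun heq ⟨k, by omega⟩
    simp only [eps, Pi.add_apply, Pi.sub_apply] at hy
    rw [if_neg (show ¬((⟨k, by omega⟩ : Fin (n+1)) = ⟨3*k, by omega⟩) by
          simp only [Fin.ext_iff, Fin.val_mk]; omega),
        if_neg (show ¬((⟨k, by omega⟩ : Fin (n+1)) = j) by
          simp only [Fin.ext_iff, Fin.val_mk]; omega),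
        if_pos (show (⟨k, by omega⟩ : Fin (n+1)) = i by
          apply Fin.ext; simp only [Fin.val_mk]; omega),
        if_neg (show ¬((⟨k, by omega⟩ : Fin (n+1)) = q) by
          simp only [Fin.ext_iff, Fin.val_mk]; omega),
        if_neg (show ¬((⟨k, by omega⟩ : Fin (n+1)) = p) by
          simp only [Fin.ext_iff, Fin.val_mk]; omega)] at hy
    simp only [eq_self_iff_true, if_true] at hy
    norm_num at hy
  · rw [if_neg h3j] at hx
    by_cases h3i : (⟨3*k, by omega⟩ : Fin (n+1)) = i
    · rw [if_pos h3i] at hx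
      norm_num at hx
    · rw [if_neg h3i] at hx
      norm_num at hx


/-- let `n ≥ 3`, `k ≥ 1` with `3k ≤ n`, and `m = 2k`. Then
`ε_k + ε_{3k}` is a root of `D_{n+1}` of height `2m` which is not the sum of two roots
of height `m`, and every positive root of `D_{n+1}` whose height is divisible by `m`
is a sum of elements of `R_m ∪ {ε_k + ε_{3k}}`. -/
theorem stmt9 (n k : ℕ) (hn : 3 ≤ n) (hk : 1 ≤ k) (h3k : 3 * k ≤ n) :
    let m : ℕ := 2 * k
    let δ : Fin (n + 1) → ℝ :=
      eps (n + 1) ⟨k, by omega⟩ + eps (n + 1) ⟨3 * k, by omega⟩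
    δ ∈ Droots n ∧ htD n δ = (2 * m : ℕ) ∧
    (¬ ∃ a b : Fin (n + 1) → ℝ, a ∈ Droots n ∧ htD n a = (m : ℝ) ∧
        b ∈ Droots n ∧ htD n b = (m : ℝ) ∧ δ = a + b) ∧
    (∀ v ∈ Droots n, 0 < htD n v → (∃ l : ℤ, htD n v = (m : ℝ) * l) →
      v ∈ AddSubmonoid.closure ({u ∈ Droots n | htD n u = (m : ℝ)} ∪ {δ})) := by
  intro m δ
  have hmpos : (0:ℝ) < (m : ℝ) := by
    have : 0 < m := by simp only [m]; omega
    exact_mod_cast this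
  refine ⟨?_, ?_, ?_, ?_⟩
  · -- δ ∈ Droots n
    exact ⟨⟨k, by omega⟩, ⟨3*k, by omega⟩, Fin.mk_lt_mk.mpr (by omega),
      Or.inr (Or.inr (Or.inl (add_comm _ _)))⟩
  · -- height of δ
    show htD n (eps (n+1) ⟨k, by omega⟩ + eps (n+1) ⟨3*k, by omega⟩) = ((2 * (2*k) : ℕ) : ℝ)
    rw [htD_add, htD_eps, htD_eps]
    simp only [Fin.val_mk]
    push_cast
    ring
  · -- δ not a sum of two roots of height m
    rintro ⟨a, b, ha, hta, hb, htb, heq⟩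
    obtain ⟨i, j, hij, hia⟩ := root_pos ha (by rw [hta]; exact hmpos)
    obtain ⟨p, q, hpq, hib⟩ := root_pos hb (by rw [htb]; exact hmpos)
    have hcs : csD n a + csD n b = 2 := by
      rw [← csD_add, ← heq]
      show csD n (eps (n+1) ⟨k, by omega⟩ + eps (n+1) ⟨3*k, by omega⟩) = 2
      rw [csD_add, csD_eps, csD_eps]; norm_num
    have hijn : (i:ℕ) < (j:ℕ) := hij
    have hpqn : (p:ℕ) < (q:ℕ) := hpq
    rcases hia with ⟨hfa, hha⟩ | ⟨hfa, hha⟩ <;> rcases hib with ⟨hfb, hhb⟩ | ⟨hfb, hhb⟩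
    · -- diff + diff : coordinate sums give 2 = 0
      rw [hfa, hfb, csD_sub, csD_sub, csD_eps, csD_eps, csD_eps, csD_eps] at hcs
      norm_num at hcs
    · -- diff + sum : main case
      have hjnat : (i:ℕ) + 2*k = (j:ℕ) := by
        have h1 : ((j:ℕ):ℝ) - ((i:ℕ):ℝ) = ((2*k : ℕ) : ℝ) := by
          rw [← hha, hta]
        have : ((i:ℕ) + 2*k : ℕ) = ((j:ℕ) : ℕ) := by
          have : (((i:ℕ) + 2*k : ℕ) : ℝ) = ((j:ℕ) : ℝ) := by push_cast at h1 ⊢; linarith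
          exact_mod_cast this
        omega
      have hqnat : (p:ℕ) + (q:ℕ) = 2*k := by
        have h1 : ((q:ℕ):ℝ) + ((p:ℕ):ℝ) = ((2*k : ℕ) : ℝ) := by
          rw [← hhb, htb]
        have : ((p:ℕ) + (q:ℕ) : ℕ) = ((2*k : ℕ) : ℕ) := by
          have : (((p:ℕ) + (q:ℕ) : ℕ) : ℝ) = ((2*k : ℕ) : ℝ) := by push_cast at h1 ⊢; linarith
          exact_mod_cast this
        omega
      rw [hfa, hfb] at heq
      exact no_decomp_aux n k hk h3k i j p q hjnat hpqn hqnat heq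
    · -- sum + diff : symmetric
      have hjnat : (p:ℕ) + 2*k = (q:ℕ) := by
        have h1 : ((q:ℕ):ℝ) - ((p:ℕ):ℝ) = ((2*k : ℕ) : ℝ) := by
          rw [← hhb, htb]
        have : ((p:ℕ) + 2*k : ℕ) = ((q:ℕ) : ℕ) := by
          have : (((p:ℕ) + 2*k : ℕ) : ℝ) = ((q:ℕ) : ℝ) := by push_cast at h1 ⊢; linarith
          exact_mod_cast this
        omega
      have hqnat : (i:ℕ) + (j:ℕ) = 2*k := by
        have h1 : ((j:ℕ):ℝ) + ((i:ℕ):ℝ) = ((2*k : ℕ) : ℝ) := by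
          rw [← hha, hta]
        have : ((i:ℕ) + (j:ℕ) : ℕ) = ((2*k : ℕ) : ℕ) := by
          have : (((i:ℕ) + (j:ℕ) : ℕ) : ℝ) = ((2*k : ℕ) : ℝ) := by push_cast at h1 ⊢; linarith
          exact_mod_cast this
        omega
      have heq' : δ = (eps (n+1) q - eps (n+1) p) + (eps (n+1) j + eps (n+1) i) :=
        heq.trans (by rw [hfa, hfb]; abel)
      exact no_decomp_aux n k hk h3k p q i j hjnat hijn hqnat heq'
    · -- sum + sum : coordinate sums give 2 = 4
      rw [hfa, hfb, csD_add, csD_add, csD_eps, csD_eps, csD_eps, csD_eps] at hcs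
      norm_num at hcs
  · -- every positive root of height divisible by m is in the closure
    intro v hv hpos ⟨l, hl⟩
    set S := AddSubmonoid.closure ({u ∈ Droots n | htD n u = (m : ℝ)} ∪ {δ}) with hS
    have hdiff : ∀ i : ℕ, (h : i + 2*k ≤ n) →
        eps (n+1) ⟨i + 2*k, by omega⟩ - eps (n+1) ⟨i, by omega⟩ ∈ S := by
      intro i0 h
      apply AddSubmonoid.subset_closure
      left
      refine ⟨⟨⟨i0, by omega⟩, ⟨i0 + 2*k, by omega⟩, Fin.mk_lt_mk.mpr (by omega), Or.inl rfl⟩, ?_⟩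
      rw [htD_sub, htD_eps, htD_eps]
      simp only [Fin.val_mk, m]
      push_cast
      ring
    have hsum : ∀ p : ℕ, (hp : p < k) →
        eps (n+1) ⟨2*k - p, by omega⟩ + eps (n+1) ⟨p, by omega⟩ ∈ S := by
      intro p hp
      apply AddSubmonoid.subset_closure
      left
      refine ⟨⟨⟨p, by omega⟩, ⟨2*k - p, by omega⟩, Fin.mk_lt_mk.mpr (by omega),
        Or.inr (Or.inr (Or.inl rfl))⟩, ?_⟩
      rw [htD_add, htD_eps, htD_eps]
      simp only [Fin.val_mk, m]
      have hsub : ((2*k - p : ℕ) : ℝ) = 2*k - p := by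
        have : p ≤ 2*k := by omega
        push_cast [this]
        ring
      rw [hsub]
      push_cast
      ring
    have hdel : eps (n+1) ⟨k, by omega⟩ + eps (n+1) ⟨3*k, by omega⟩ ∈ S := by
      apply AddSubmonoid.subset_closure
      right
      rfl
    obtain ⟨i, j, hij, hform⟩ := root_pos hv hpos
    have hijn : (i:ℕ) < (j:ℕ) := hij
    rcases hform with ⟨hf, hh⟩ | ⟨hf, hh⟩
    · -- difference root
      have hZ : ((j:ℕ):ℤ) - ((i:ℕ):ℤ) = 2*k*l := by
        have : ((j:ℕ):ℝ) - ((i:ℕ):ℝ) = ((2*k:ℕ):ℝ) * (l:ℝ) := by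
          rw [← hh, hl]
        exact_mod_cast (by push_cast at this ⊢; linarith : ((j:ℕ):ℝ) - ((i:ℕ):ℝ) = ((2*k*l : ℤ) : ℝ))
      have hlpos : 0 < l := by nlinarith [hZ, hijn]
      obtain ⟨ln, rfl⟩ : ∃ ln : ℕ, l = (ln : ℤ) := ⟨l.toNat, (Int.toNat_of_nonneg (by omega)).symm⟩
      have hln : 1 ≤ ln := by exact_mod_cast hlpos
      have hnat : (j:ℕ) = (i:ℕ) + 2*k*ln := by
        have : ((j:ℕ):ℤ) = ((i:ℕ) + 2*k*ln : ℕ) := by push_cast; omega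
        exact_mod_cast this
      have := DdiffMem n k hk S hdiff ln (i:ℕ) (j:ℕ) hln (by omega) (by omega) hnat
      rw [hf]
      exact this
    · -- sum root
      have hZ : ((j:ℕ):ℤ) + ((i:ℕ):ℤ) = 2*k*l := by
        have : ((j:ℕ):ℝ) + ((i:ℕ):ℝ) = ((2*k:ℕ):ℝ) * (l:ℝ) := by
          rw [← hh, hl]
        exact_mod_cast (by push_cast at this ⊢; linarith : ((j:ℕ):ℝ) + ((i:ℕ):ℝ) = ((2*k*l : ℤ) : ℝ))
      have hlpos : 0 < l := by nlinarith [hZ, hijn]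
      obtain ⟨ln, rfl⟩ : ∃ ln : ℕ, l = (ln : ℤ) := ⟨l.toNat, (Int.toNat_of_nonneg (by omega)).symm⟩
      have hln : 1 ≤ ln := by exact_mod_cast hlpos
      have hnat : (i:ℕ) + (j:ℕ) = 2*k*ln := by
        have : ((i:ℕ) + (j:ℕ) : ℕ) = ((2*k*ln : ℕ) : ℤ) := by push_cast; omega
        exact_mod_cast this
      have := DsumMem n k hk h3k S hdiff hsum hdel ln (i:ℕ) (j:ℕ) hijn (by omega) hln hnat
      rw [hf]
      exact this
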